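/- For any finite Markov chain M, integer k ≥ 1, and λ ∈ (0,1], the infimum inf{d_λ(M,N) : N a Markov chain with at most k states} is attained, i.e., there exists an optimal k-state approximant N* with d_λ(M,N*) = inf{d_λ(M,N) : N with at most k states}. -/
import Mathlib

open Finset

def IsDist {X : Type*} [Fintype X] (μ : X → ℝ) : Prop :=
  (∀ x, 0 ≤ μ x) ∧ ∑ x, μ x = 1

def IsCoupling {X : Type*} [Fintype X] (μ ν : X → ℝ) (ω : X × X → ℝ) : Prop :=
  IsDist ω ∧ (∀ x, ∑ y, ω (x, y) = μ x) ∧ (∀ y, ∑ x, ω (x, y) = ν y)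

noncomputable def kant {X : Type*} [Fintype X] (d : X → X → ℝ) (μ ν : X → ℝ) : ℝ :=
  sInf { c | ∃ ω : X × X → ℝ, IsCoupling μ ν ω ∧ c = ∑ p : X × X, d p.1 p.2 * ω p }

open Classical in
noncomputable def psi {S L : Type*} [Fintype S] (lam : ℝ) (T : S → S → ℝ) (lab : S → L)
    (d : S → S → ℝ) : S → S → ℝ :=
  fun s t => if lab s = lab t then lam * kant d (T s) (T t) else 1

noncomputable def bdist {S L : Type*} [Fintype S] (lam : ℝ) (T : S → S → ℝ) (lab : S → L) :
    S → S → ℝ := fun s t =>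
  sInf { r | ∃ d : S → S → ℝ, (∀ a b, 0 ≤ d a b ∧ d a b ≤ 1) ∧
      (∀ a b, psi lam T lab d a b ≤ d a b) ∧ r = d s t }

def sumT {M N : Type*} (τ : M → M → ℝ) (θ : N → N → ℝ) : M ⊕ N → M ⊕ N → ℝ
  | Sum.inl m, Sum.inl m' => τ m m'
  | Sum.inr n, Sum.inr n' => θ n n'
  | _, _ => 0

def sumL {M N L : Type*} (ℓ : M → L) (α : N → L) : M ⊕ N → L
  | Sum.inl m => ℓ m
  | Sum.inr n => α n

section helpers
variable {X : Type*} [Fintype X]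

lemma coupling_mem_Icc {μ ν : X → ℝ} {ω : X × X → ℝ} (h : IsCoupling μ ν ω) (p : X × X) :
    ω p ∈ Set.Icc (0:ℝ) 1 := by
  refine ⟨h.1.1 p, ?_⟩
  calc ω p ≤ ∑ q, ω q := Finset.single_le_sum (fun q _ => h.1.1 q) (Finset.mem_univ p)
  _ = 1 := h.1.2

lemma prod_coupling {μ ν : X → ℝ} (hμ : IsDist μ) (hν : IsDist ν) :
    IsCoupling μ ν (fun p => μ p.1 * ν p.2) := by
  refine ⟨⟨fun p => mul_nonneg (hμ.1 _) (hν.1 _), ?_⟩, fun x => ?_, fun y => ?_⟩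
  · rw [Fintype.sum_prod_type]
    simp_rw [← Finset.mul_sum, hν.2]
    simpa using hμ.2
  · simp [← Finset.mul_sum, hν.2]
  · simp [← Finset.sum_mul, hμ.2]

lemma couplingSet_isCompact (μ ν : X → ℝ) :
    IsCompact {ω : X × X → ℝ | IsCoupling μ ν ω} := by
  have hC : IsClosed {ω : X × X → ℝ | IsCoupling μ ν ω} := by
    have : {ω : X × X → ℝ | IsCoupling μ ν ω}
        = ((⋂ p, {ω : X × X → ℝ | 0 ≤ ω p}) ∩ {ω | ∑ p, ω p = 1}
          ∩ (⋂ x, {ω | ∑ y, ω (x, y) = μ x}) ∩ (⋂ y, {ω | ∑ x, ω (x, y) = ν y})) := by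
      ext ω
      simp only [Set.mem_setOf_eq, Set.mem_inter_iff, Set.mem_iInter, IsCoupling, IsDist]
      tauto
    rw [this]
    refine (((isClosed_iInter fun p => isClosed_le continuous_const (continuous_apply p)).inter
      (isClosed_eq (continuous_finset_sum _ fun p _ => continuous_apply p) continuous_const)).inter
      (isClosed_iInter fun x => isClosed_eq
        (continuous_finset_sum _ fun y _ => continuous_apply (x, y)) continuous_const)).inter
      (isClosed_iInter fun y => isClosed_eq
        (continuous_finset_sum _ fun x _ => continuous_apply (x, y)) continuous_const)
  exact IsCompact.of_isClosed_subset
    (isCompact_univ_pi fun _ => isCompact_Icc)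
    hC (fun ω hω => Set.mem_univ_pi.2 fun p => coupling_mem_Icc hω p)

lemma kantSet_eq_image (d : X → X → ℝ) (μ ν : X → ℝ) :
    { c | ∃ ω : X × X → ℝ, IsCoupling μ ν ω ∧ c = ∑ p : X × X, d p.1 p.2 * ω p }
      = (fun ω : X × X → ℝ => ∑ p : X × X, d p.1 p.2 * ω p) '' {ω | IsCoupling μ ν ω} := by
  ext c
  constructor
  · rintro ⟨ω, hω, rfl⟩; exact ⟨ω, hω, rfl⟩
  · rintro ⟨ω, hω, rfl⟩; exact ⟨ω, hω, rfl⟩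

lemma kant_exists {d : X → X → ℝ} {μ ν : X → ℝ} (hμ : IsDist μ) (hν : IsDist ν) :
    ∃ ω, IsCoupling μ ν ω ∧ kant d μ ν = ∑ p : X × X, d p.1 p.2 * ω p := by
  have hcost : Continuous (fun ω : X × X → ℝ => ∑ p : X × X, d p.1 p.2 * ω p) :=
    continuous_finset_sum _ fun p _ => continuous_const.mul (continuous_apply p)
  have hcomp := (couplingSet_isCompact μ ν).image hcost
  have hne : ((fun ω : X × X → ℝ => ∑ p : X × X, d p.1 p.2 * ω p) ''
      {ω | IsCoupling μ ν ω}).Nonempty :=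
    ⟨_, ⟨_, prod_coupling hμ hν, rfl⟩⟩
  have hmem := hcomp.sInf_mem hne
  rw [kant, kantSet_eq_image]
  obtain ⟨ω, hω, hval⟩ := hmem
  exact ⟨ω, hω, hval.symm⟩

lemma kant_le {d : X → X → ℝ} {μ ν : X → ℝ} {ω : X × X → ℝ} (hω : IsCoupling μ ν ω) :
    kant d μ ν ≤ ∑ p : X × X, d p.1 p.2 * ω p := by
  have hcost : Continuous (fun ω : X × X → ℝ => ∑ p : X × X, d p.1 p.2 * ω p) :=
    continuous_finset_sum _ fun p _ => continuous_const.mul (continuous_apply p)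
  have hcomp := (couplingSet_isCompact μ ν).image hcost
  rw [kant, kantSet_eq_image]
  exact csInf_le hcomp.bddBelow ⟨ω, hω, rfl⟩

lemma kant_one {μ ν : X → ℝ} (hμ : IsDist μ) (hν : IsDist ν) :
    kant (fun _ _ => (1:ℝ)) μ ν = 1 := by
  obtain ⟨ω, hω, hval⟩ := kant_exists (d := fun _ _ => (1:ℝ)) hμ hν
  rw [hval]
  simpa using hω.1.2

end helpers

section sumhelpers
variable {M N L : Type*} [Fintype M] [Fintype N]

lemma sumT_isDist {τ : M → M → ℝ} {θ : N → N → ℝ} (hτ : ∀ m, IsDist (τ m))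
    (hθ : ∀ i, IsDist (θ i)) : ∀ s, IsDist (sumT τ θ s) := by
  intro s
  cases s with
  | inl m =>
      refine ⟨fun x => ?_, ?_⟩
      · cases x with
        | inl m' => exact (hτ m).1 m'
        | inr n' => exact le_refl 0
      · rw [Fintype.sum_sum_type]
        simpa [sumT] using (hτ m).2
  | inr n =>
      refine ⟨fun x => ?_, ?_⟩
      · cases x with
        | inl m' => exact le_refl 0
        | inr n' => exact (hθ n).1 n'
      · rw [Fintype.sum_sum_type]
        simpa [sumT] using (hθ n).2

end sumhelpers

section admiss
variable {S L : Type*} [Fintype S]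

lemma one_admissible {lam : ℝ} (hl0 : 0 ≤ lam) (hl1 : lam ≤ 1) {T : S → S → ℝ}
    (hT : ∀ s, IsDist (T s)) (lab : S → L) :
    ∀ a b, psi lam T lab (fun _ _ => (1:ℝ)) a b ≤ 1 := by
  intro a b
  rw [psi]
  split
  · rw [kant_one (hT a) (hT b), mul_one]; exact hl1
  · exact le_refl 1

lemma bdistSet_nonempty {lam : ℝ} (hl0 : 0 ≤ lam) (hl1 : lam ≤ 1) {T : S → S → ℝ}
    (hT : ∀ s, IsDist (T s)) (lab : S → L) (s t : S) :
    Set.Nonempty { r | ∃ d : S → S → ℝ, (∀ a b, 0 ≤ d a b ∧ d a b ≤ 1) ∧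
      (∀ a b, psi lam T lab d a b ≤ d a b) ∧ r = d s t } := by
  exact ⟨1, fun _ _ => 1, fun a b => ⟨zero_le_one, le_refl 1⟩,
    one_admissible hl0 hl1 hT lab, rfl⟩

lemma bdistSet_bddBelow {lam : ℝ} {T : S → S → ℝ} (lab : S → L) (s t : S) :
    BddBelow { r | ∃ d : S → S → ℝ, (∀ a b, 0 ≤ d a b ∧ d a b ≤ 1) ∧
      (∀ a b, psi lam T lab d a b ≤ d a b) ∧ r = d s t } := by
  refine ⟨0, ?_⟩
  rintro r ⟨d, hd, _, rfl⟩
  exact (hd s t).1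

lemma bdist_congr {L₁ L₂ : Type*} (lam : ℝ) (T : S → S → ℝ) (lab₁ : S → L₁) (lab₂ : S → L₂)
    (h : ∀ a b, lab₁ a = lab₁ b ↔ lab₂ a = lab₂ b) :
    bdist lam T lab₁ = bdist lam T lab₂ := by
  have hpsi : ∀ d : S → S → ℝ, psi lam T lab₁ d = psi lam T lab₂ d := by
    intro d
    funext a b
    rw [psi, psi]
    by_cases hab : lab₁ a = lab₁ b
    · rw [if_pos hab, if_pos ((h a b).1 hab)]
    · rw [if_neg hab, if_neg (fun hc => hab ((h a b).2 hc))]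
  funext s t
  rw [bdist, bdist]
  congr 1
  ext r
  constructor
  · rintro ⟨d, hd1, hd2, rfl⟩
    exact ⟨d, hd1, by rw [← hpsi d]; exact hd2, rfl⟩
  · rintro ⟨d, hd1, hd2, rfl⟩
    exact ⟨d, hd1, by rw [hpsi d]; exact hd2, rfl⟩

end admiss

open Filter Topology

section compactcore
variable {M L : Type*} [Fintype M] [Nonempty M]

lemma tendsto_sumT {N : Type*} {τ : M → M → ℝ} {θseq : ℕ → N → N → ℝ} {θ : N → N → ℝ}
    (h : ∀ i j, Tendsto (fun k => θseq k i j) atTop (𝓝 (θ i j))) (s t : M ⊕ N) :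
    Tendsto (fun k => sumT τ (θseq k) s t) atTop (𝓝 (sumT τ θ s t)) := by
  cases s <;> cases t <;> simp only [sumT] <;>
    first | exact tendsto_const_nhds | exact h _ _

lemma exists_min_theta {lam : ℝ} (hl0 : 0 < lam) (hl1 : lam ≤ 1)
    (τ : M → M → ℝ) (hτ : ∀ m, IsDist (τ m)) (ℓ : M → L) (m0 : M) (n : ℕ)
    (α : Fin (n+1) → L) (n0 : Fin (n+1)) :
    ∃ θ : Fin (n+1) → Fin (n+1) → ℝ, (∀ i, IsDist (θ i)) ∧
      ∀ θ' : Fin (n+1) → Fin (n+1) → ℝ, (∀ i, IsDist (θ' i)) →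
        bdist lam (sumT τ θ) (sumL ℓ α) (Sum.inl m0) (Sum.inr n0)
          ≤ bdist lam (sumT τ θ') (sumL ℓ α) (Sum.inl m0) (Sum.inr n0) := by
  classical
  let A : Set ((Fin (n+1) → Fin (n+1) → ℝ) × (M ⊕ Fin (n+1) → M ⊕ Fin (n+1) → ℝ)) :=
    {p | (∀ i, IsDist (p.1 i)) ∧ (∀ a b, 0 ≤ p.2 a b ∧ p.2 a b ≤ 1) ∧
      ∀ a b, psi lam (sumT τ p.1) (sumL ℓ α) p.2 a b ≤ p.2 a b}
  have hseq : IsSeqClosed A := by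
    intro pseq p hmem htend
    have hfst : Tendsto (fun k => (pseq k).1) atTop (𝓝 p.1) :=
      (continuous_fst.tendsto p).comp htend
    have hsnd : Tendsto (fun k => (pseq k).2) atTop (𝓝 p.2) :=
      (continuous_snd.tendsto p).comp htend
    have hθc : ∀ i j, Tendsto (fun k => (pseq k).1 i j) atTop (𝓝 (p.1 i j)) :=
      fun i j => tendsto_pi_nhds.mp (tendsto_pi_nhds.mp hfst i) j
    have hdc : ∀ a b, Tendsto (fun k => (pseq k).2 a b) atTop (𝓝 (p.2 a b)) :=
      fun a b => tendsto_pi_nhds.mp (tendsto_pi_nhds.mp hsnd a) b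
    have hdist : ∀ i, IsDist (p.1 i) := by
      intro i
      refine ⟨fun j => ge_of_tendsto (hθc i j)
        (Eventually.of_forall fun k => ((hmem k).1 i).1 j), ?_⟩
      have hs : Tendsto (fun k => ∑ j, (pseq k).1 i j) atTop (𝓝 (∑ j, p.1 i j)) :=
        tendsto_finset_sum _ fun j _ => hθc i j
      have he : (fun k => ∑ j, (pseq k).1 i j) = fun _ => (1:ℝ) :=
        funext fun k => ((hmem k).1 i).2
      rw [he] at hs
      exact tendsto_nhds_unique hs tendsto_const_nhds
    have hbounds : ∀ a b, 0 ≤ p.2 a b ∧ p.2 a b ≤ 1 := fun a b =>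
      ⟨ge_of_tendsto (hdc a b) (Eventually.of_forall fun k => ((hmem k).2.1 a b).1),
       le_of_tendsto (hdc a b) (Eventually.of_forall fun k => ((hmem k).2.1 a b).2)⟩
    refine ⟨hdist, hbounds, ?_⟩
    intro a b
    rw [psi]
    by_cases hab : sumL ℓ α a = sumL ℓ α b
    · rw [if_pos hab]
      have hfix : ∀ k, lam * kant ((pseq k).2) (sumT τ (pseq k).1 a) (sumT τ (pseq k).1 b)
          ≤ (pseq k).2 a b := by
        intro k
        have h := (hmem k).2.2 a b
        rwa [psi, if_pos hab] at h
      choose ω hω hkval using fun k =>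
        kant_exists (d := (pseq k).2) (sumT_isDist hτ ((hmem k).1) a)
          (sumT_isDist hτ ((hmem k).1) b)
      have hbox : ∀ k, ω k ∈ (Set.univ.pi
          fun _ : (M ⊕ Fin (n+1)) × (M ⊕ Fin (n+1)) => Set.Icc (0:ℝ) 1) :=
        fun k => Set.mem_univ_pi.2 fun q => coupling_mem_Icc (hω k) q
      obtain ⟨ωl, _, φ, hφ, hφt⟩ :=
        (isCompact_univ_pi fun _ => isCompact_Icc).tendsto_subseq hbox
      have hωc : ∀ q, Tendsto (fun k => ω (φ k) q) atTop (𝓝 (ωl q)) :=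
        fun q => ((continuous_apply q).tendsto _).comp hφt
      have hcoup : IsCoupling (sumT τ p.1 a) (sumT τ p.1 b) ωl := by
      
        refine ⟨⟨fun q => ge_of_tendsto (hωc q)
            (Eventually.of_forall fun k => (hω (φ k)).1.1 q), ?_⟩, fun x => ?_, fun y => ?_⟩
        · have h1 : Tendsto (fun k => ∑ q, ω (φ k) q) atTop (𝓝 (∑ q, ωl q)) :=
            tendsto_finset_sum _ fun q _ => hωc q
          have he : (fun k => ∑ q, ω (φ k) q) = fun _ => (1:ℝ) :=
            funext fun k => (hω (φ k)).1.2
          rw [he] at h1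
          exact tendsto_nhds_unique h1 tendsto_const_nhds
        · have h1 : Tendsto (fun k => ∑ y, ω (φ k) (x, y)) atTop (𝓝 (∑ y, ωl (x, y))) :=
            tendsto_finset_sum _ fun y _ => hωc (x, y)
          have he : (fun k => ∑ y, ω (φ k) (x, y)) = fun k => sumT τ (pseq (φ k)).1 a x :=
            funext fun k => (hω (φ k)).2.1 x
          rw [he] at h1
          have h2 : Tendsto (fun k => sumT τ (pseq (φ k)).1 a x) atTop (𝓝 (sumT τ p.1 a x)) :=
            (tendsto_sumT hθc a x).comp hφ.tendsto_atTop
          exact tendsto_nhds_unique h1 h2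
        · have h1 : Tendsto (fun k => ∑ x, ω (φ k) (x, y)) atTop (𝓝 (∑ x, ωl (x, y))) :=
            tendsto_finset_sum _ fun x _ => hωc (x, y)
          have he : (fun k => ∑ x, ω (φ k) (x, y)) = fun k => sumT τ (pseq (φ k)).1 b y :=
            funext fun k => (hω (φ k)).2.2 y
          rw [he] at h1
          have h2 : Tendsto (fun k => sumT τ (pseq (φ k)).1 b y) atTop (𝓝 (sumT τ p.1 b y)) :=
            (tendsto_sumT hθc b y).comp hφ.tendsto_atTop
          exact tendsto_nhds_unique h1 h2
      have hcost : Tendsto (fun k => ∑ q : (M ⊕ Fin (n+1)) × (M ⊕ Fin (n+1)),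
          (pseq (φ k)).2 q.1 q.2 * ω (φ k) q) atTop
          (𝓝 (∑ q : (M ⊕ Fin (n+1)) × (M ⊕ Fin (n+1)), p.2 q.1 q.2 * ωl q)) :=
        tendsto_finset_sum _ fun q _ =>
          ((hdc q.1 q.2).comp hφ.tendsto_atTop).mul (hωc q)
      have hkle : kant p.2 (sumT τ p.1 a) (sumT τ p.1 b)
          ≤ ∑ q : (M ⊕ Fin (n+1)) × (M ⊕ Fin (n+1)), p.2 q.1 q.2 * ωl q := kant_le hcoup
      have hfinal : lam * (∑ q : (M ⊕ Fin (n+1)) × (M ⊕ Fin (n+1)), p.2 q.1 q.2 * ωl q)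
          ≤ p.2 a b := by
        refine le_of_tendsto_of_tendsto' (hcost.const_mul lam)
          ((hdc a b).comp hφ.tendsto_atTop) ?_
        intro k
        calc lam * ∑ q : (M ⊕ Fin (n+1)) × (M ⊕ Fin (n+1)),
              (pseq (φ k)).2 q.1 q.2 * ω (φ k) q
            = lam * kant ((pseq (φ k)).2) (sumT τ (pseq (φ k)).1 a) (sumT τ (pseq (φ k)).1 b) := by
              rw [hkval (φ k)]
          _ ≤ (pseq (φ k)).2 a b := hfix (φ k)
      calc lam * kant p.2 (sumT τ p.1 a) (sumT τ p.1 b)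
          ≤ lam * ∑ q : (M ⊕ Fin (n+1)) × (M ⊕ Fin (n+1)), p.2 q.1 q.2 * ωl q :=
            mul_le_mul_of_nonneg_left hkle hl0.le
        _ ≤ p.2 a b := hfinal
    · rw [if_neg hab]
      refine ge_of_tendsto (hdc a b) (Eventually.of_forall fun k => ?_)
      have h := (hmem k).2.2 a b
      rwa [psi, if_neg hab] at h
  have hsub : A ⊆ (Set.univ.pi fun _ : Fin (n+1) => Set.univ.pi
        fun _ : Fin (n+1) => Set.Icc (0:ℝ) 1) ×ˢ
      (Set.univ.pi fun _ : M ⊕ Fin (n+1) => Set.univ.pi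
        fun _ : M ⊕ Fin (n+1) => Set.Icc (0:ℝ) 1) := by
    rintro ⟨θ, d⟩ ⟨h1, h2, _⟩
    refine ⟨Set.mem_univ_pi.2 fun i => Set.mem_univ_pi.2 fun j => ⟨(h1 i).1 j, ?_⟩,
      Set.mem_univ_pi.2 fun a => Set.mem_univ_pi.2 fun b => ⟨(h2 a b).1, (h2 a b).2⟩⟩
    calc θ i j ≤ ∑ j', θ i j' :=
          Finset.single_le_sum (fun j' _ => (h1 i).1 j') (Finset.mem_univ j)
      _ = 1 := (h1 i).2
  have hAcomp : IsCompact A :=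
    IsCompact.of_isClosed_subset
      ((isCompact_univ_pi fun _ => isCompact_univ_pi fun _ => isCompact_Icc).prod
        (isCompact_univ_pi fun _ => isCompact_univ_pi fun _ => isCompact_Icc))
      hseq.isClosed hsub
  have hθu : ∀ i : Fin (n+1), IsDist (fun _ : Fin (n+1) => ((n:ℝ)+1)⁻¹) := by
    intro i
    constructor
    · intro j
      positivity
    · rw [Finset.sum_const, Finset.card_univ, Fintype.card_fin, nsmul_eq_mul]
      push_cast
      rw [mul_inv_cancel₀]
      positivity
  have hAne : A.Nonempty := by
    refine ⟨(fun _ _ => ((n:ℝ)+1)⁻¹, fun _ _ => 1), hθu,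
      fun a b => ⟨zero_le_one, le_refl 1⟩, ?_⟩
    exact one_admissible hl0.le hl1 (sumT_isDist hτ hθu) (sumL ℓ α)
  obtain ⟨q, hqA, hqmin⟩ := hAcomp.exists_isMinOn hAne
    (Continuous.continuousOn ((continuous_apply (Sum.inr n0)).comp
      ((continuous_apply (Sum.inl m0)).comp continuous_snd)))
  refine ⟨q.1, hqA.1, ?_⟩
  intro θ' hθ'
  have h1 : bdist lam (sumT τ q.1) (sumL ℓ α) (Sum.inl m0) (Sum.inr n0)
      ≤ q.2 (Sum.inl m0) (Sum.inr n0) :=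
    csInf_le (bdistSet_bddBelow _ _ _) ⟨q.2, hqA.2.1, hqA.2.2, rfl⟩
  refine h1.trans (le_csInf
    (bdistSet_nonempty hl0.le hl1 (sumT_isDist hτ hθ') (sumL ℓ α) _ _) ?_)
  rintro r ⟨d', hd1, hd2, rfl⟩
  exact hqmin (Set.mem_setOf_eq ▸ ⟨hθ', hd1, hd2⟩ :
    (θ', d') ∈ A)

end compactcore

theorem stmt11 {M L : Type*} [Fintype M] [Nonempty M] (k : ℕ) (hk : 1 ≤ k)
    (lam : ℝ) (hlam : 0 < lam ∧ lam ≤ 1)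
    (τ : M → M → ℝ) (hτ : ∀ m, IsDist (τ m)) (ℓ : M → L) (m0 : M) :
    ∃ (n : ℕ) (_ : 0 < n) (_ : n ≤ k)
      (θ : Fin n → Fin n → ℝ) (α : Fin n → L) (n0 : Fin n),
      (∀ i, IsDist (θ i)) ∧
      ∀ (n' : ℕ), 0 < n' → n' ≤ k →
        ∀ (θ' : Fin n' → Fin n' → ℝ) (α' : Fin n' → L) (n0' : Fin n'),
          (∀ i, IsDist (θ' i)) →
          bdist lam (sumT τ θ) (sumL ℓ α) (Sum.inl m0) (Sum.inr n0)
            ≤ bdist lam (sumT τ θ') (sumL ℓ α') (Sum.inl m0) (Sum.inr n0') := by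
  classical
  obtain ⟨hl0, hl1⟩ := hlam
  let I := Σ m : Fin k, ((M ⊕ Fin (m.1+1) → M ⊕ Fin (m.1+1) → Bool) × Fin (m.1+1))
  haveI : Fintype I := by infer_instance
  let Rlz : I → Prop := fun i =>
    ∃ α : Fin (i.1.1+1) → L, ∀ a b, (sumL ℓ α a = sumL ℓ α b) ↔ i.2.1 a b = true
  have key : ∀ i : I, ∃ (α : Fin (i.1.1+1) → L) (θ : Fin (i.1.1+1) → Fin (i.1.1+1) → ℝ),
      (Rlz i → ∀ a b, (sumL ℓ α a = sumL ℓ α b) ↔ i.2.1 a b = true) ∧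
      (∀ j, IsDist (θ j)) ∧
      ∀ θ' : Fin (i.1.1+1) → Fin (i.1.1+1) → ℝ, (∀ j, IsDist (θ' j)) →
        bdist lam (sumT τ θ) (sumL ℓ α) (Sum.inl m0) (Sum.inr i.2.2)
          ≤ bdist lam (sumT τ θ') (sumL ℓ α) (Sum.inl m0) (Sum.inr i.2.2) := by
    intro i
    by_cases h : Rlz i
    · obtain ⟨θ, h1, h2⟩ := exists_min_theta hl0 hl1 τ hτ ℓ m0 i.1.1 h.choose i.2.2
      exact ⟨h.choose, θ, fun _ => h.choose_spec, h1, h2⟩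
    · obtain ⟨θ, h1, h2⟩ := exists_min_theta hl0 hl1 τ hτ ℓ m0 i.1.1
        (fun _ => ℓ m0) i.2.2
      exact ⟨fun _ => ℓ m0, θ, fun hr => absurd hr h, h1, h2⟩
  choose A Θ hA hΘ hmin using key
  let G : I → ℝ := fun i =>
    bdist lam (sumT τ (Θ i)) (sumL ℓ (A i)) (Sum.inl m0) (Sum.inr i.2.2)
  let s : Finset I := Finset.univ.filter Rlz
  have hsne : s.Nonempty := by
    refine ⟨⟨⟨0, hk⟩, (fun a b =>
      decide (sumL ℓ (fun _ : Fin 1 => ℓ m0) a = sumL ℓ (fun _ : Fin 1 => ℓ m0) b), 0)⟩, ?_⟩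
    refine Finset.mem_filter.2 ⟨Finset.mem_univ _, ⟨fun _ => ℓ m0, fun a b => ?_⟩⟩
    simp
  obtain ⟨istar, histar, hminG⟩ := s.exists_min_image G hsne
  refine ⟨istar.1.1 + 1, Nat.succ_pos _, Nat.succ_le_of_lt istar.1.2, Θ istar, A istar,
    istar.2.2, hΘ istar, ?_⟩
  intro n' hn' hn'k θ' α' n0' hθ'
  obtain ⟨m, rfl⟩ : ∃ m, n' = m + 1 := ⟨n' - 1, (Nat.succ_pred_eq_of_pos hn').symm⟩
  have hmk : m < k := Nat.lt_of_lt_of_le (Nat.lt_succ_self m) hn'k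
  let b' : M ⊕ Fin (m+1) → M ⊕ Fin (m+1) → Bool :=
    fun a b => decide (sumL ℓ α' a = sumL ℓ α' b)
  let i' : I := ⟨⟨m, hmk⟩, (b', n0')⟩
  have hrlz : Rlz i' := ⟨α', fun a b => by simp [i', b']⟩
  have hi's : i' ∈ s := Finset.mem_filter.2 ⟨Finset.mem_univ _, hrlz⟩
  have step1 : G istar ≤ G i' := hminG i' hi's
  have hpat := hA i' hrlz
  have hcongr : bdist lam (sumT τ θ') (sumL ℓ (A i'))
      = bdist lam (sumT τ θ') (sumL ℓ α') := by
    refine bdist_congr lam (sumT τ θ') (sumL ℓ (A i')) (sumL ℓ α') (fun a b => ?_)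
    refine (hpat a b).trans ?_
    simp [i', b']
  have step2 : G i' ≤ bdist lam (sumT τ θ') (sumL ℓ (A i')) (Sum.inl m0) (Sum.inr n0') :=
    hmin i' θ' hθ'
  refine step1.trans (step2.trans (le_of_eq ?_))
  rw [hcongr]
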